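/- Let ε ∈ (0,1), δ ∈ (0, 1/e], K ≥ 1 an integer, c_ε ≥ 1, and 0 < Δ ≤ 1. If t satisfies (1/t)·log(c_ε·K·log((1+ε)·t)/δ) ≥ Δ²/(2(1+ε)(1+√ε)²), then t ≤ (2(1+ε)(1+√ε)²/Δ²)·log( (2·c_ε·K/δ)·log( 2·c_ε·K·(1+√ε)²·(1+ε)²/(δ·Δ²) ) ). -/

import Mathlib

open Real

/-- Linear upper bound on log: `log x ≤ α x - 1 - log α` for positive `x, α`. -/
lemma log_le_linear_aux (α x : ℝ) (hα : 0 < α) (hx : 0 < x) :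
    Real.log x ≤ α * x - 1 - Real.log α := by
  have h := Real.log_le_sub_one_of_pos (mul_pos hα hx)
  rw [Real.log_mul (ne_of_gt hα) (ne_of_gt hx)] at h
  linarith

set_option maxHeartbeats 1000000 in
theorem lil_radius_inversion (ε δ c Δ t : ℝ) (K : ℕ)
    (hε : ε ∈ Set.Ioo (0:ℝ) 1) (hδ : δ ∈ Set.Ioc (0:ℝ) (Real.exp 1)⁻¹)
    (hK : 1 ≤ K) (hc : 1 ≤ c) (hΔ : Δ ∈ Set.Ioc (0:ℝ) 1) (ht : 1 ≤ t)
    (h : Δ ^ 2 / (2 * (1 + ε) * (1 + Real.sqrt ε) ^ 2) ≤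
        (1 / t) * Real.log (c * K * Real.log ((1 + ε) * t) / δ)) :
    t ≤ (2 * (1 + ε) * (1 + Real.sqrt ε) ^ 2 / Δ ^ 2) *
      Real.log ((2 * c * K / δ) *
        Real.log (2 * c * K * (1 + Real.sqrt ε) ^ 2 * (1 + ε) ^ 2 / (δ * Δ ^ 2))) := by
  obtain ⟨hε0, hε1⟩ := hε
  obtain ⟨hδ0, hδe⟩ := hδ
  obtain ⟨hΔ0, hΔ1⟩ := hΔ
  have hK1 : (1:ℝ) ≤ (K:ℝ) := by exact_mod_cast hK
  have ht0 : 0 < t := lt_of_lt_of_le one_pos ht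
  have hs0 : 0 ≤ Real.sqrt ε := Real.sqrt_nonneg ε
  set s := Real.sqrt ε with hs
  clear_value s
  set A := 2 * (1 + ε) * (1 + s) ^ 2 with hA
  clear_value A
  have hA2 : (2:ℝ) ≤ A := by nlinarith
  have hA0 : 0 < A := by linarith
  set b := Δ ^ 2 / A with hb
  clear_value b
  have hb0 : 0 < b := by rw [hb]; exact div_pos (by positivity) hA0
  have hΔsq : Δ ^ 2 ≤ 1 := by nlinarith
  have hbhalf : b ≤ 1 / 2 := by
    rw [hb, div_le_div_iff₀ hA0 two_pos]
    linarith
  set C := c * (K:ℝ) / δ with hC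
  clear_value C
  have he2 : (2:ℝ) ≤ Real.exp 1 := by
    have := Real.add_one_le_exp 1
    linarith
  have he0 : (0:ℝ) < Real.exp 1 := Real.exp_pos 1
  have hlogE : Real.log (Real.exp 1) = 1 := Real.log_exp 1
  set E := Real.exp 1 with hE
  clear_value E
  have hδhalf : δ ≤ 1 / 2 := by
    have : (E)⁻¹ ≤ 1 / 2 := by
      rw [inv_le_comm₀ (by positivity) (by norm_num)]
      linarith
    linarith
  have hcK1 : (1:ℝ) ≤ c * (K:ℝ) := by nlinarith
  have hC2 : (2:ℝ) ≤ C := by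
    rw [hC, le_div_iff₀ hδ0]
    linarith
  have hC0 : (0:ℝ) < C := by linarith
  -- positivity of the inner log
  have h1εt : (1:ℝ) < (1 + ε) * t := by nlinarith
  have hεt0 : (0:ℝ) < (1 + ε) * t := by linarith
  have hlog1 : 0 < Real.log ((1 + ε) * t) :=
    Real.log_pos h1εt
  -- rewrite hypothesis as b * t ≤ log (C * log ((1+ε) t))
  have harg : c * (K:ℝ) * Real.log ((1 + ε) * t) / δ = C * Real.log ((1 + ε) * t) := by
    rw [hC]; field_simp
  have hbt : b * t ≤ Real.log (C * Real.log ((1 + ε) * t)) := by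
    have h' := h
    rw [harg] at h'
    calc b * t ≤ (1 / t) * Real.log (C * Real.log ((1 + ε) * t)) * t := by
          exact mul_le_mul_of_nonneg_right h' (le_of_lt ht0)
      _ = Real.log (C * Real.log ((1 + ε) * t)) := by field_simp
  have hCL0 : 0 < C * Real.log ((1 + ε) * t) := mul_pos hC0 hlog1
  -- log u ≤ u / e
  have hloge : Real.log ((1 + ε) * t) ≤ (1 + ε) * t / E := by
    have := log_le_linear_aux E⁻¹ ((1 + ε) * t) (by positivity) hεt0
    rw [Real.log_inv, hlogE] at this
    rw [div_eq_inv_mul]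
    linarith
  -- crude bound chain
  have hstep2 : C * Real.log ((1 + ε) * t) ≤ C * (1 + ε) / E * t := by
    calc C * Real.log ((1 + ε) * t) ≤ C * ((1 + ε) * t / E) :=
          mul_le_mul_of_nonneg_left hloge (le_of_lt hC0)
      _ = C * (1 + ε) / E * t := by ring
  have hD0 : 0 < C * (1 + ε) / E := by positivity
  have hstep3 : Real.log (C * Real.log ((1 + ε) * t)) ≤
      Real.log (C * (1 + ε) / E) + Real.log t := by
    calc Real.log (C * Real.log ((1 + ε) * t)) ≤
          Real.log (C * (1 + ε) / E * t) := Real.log_le_log hCL0 hstep2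
      _ = Real.log (C * (1 + ε) / E) + Real.log t :=
          Real.log_mul (ne_of_gt hD0) (ne_of_gt ht0)
  have hlogt : Real.log t ≤ (b / 2) * t - 1 - Real.log (b / 2) := by
    exact log_le_linear_aux (b / 2) t (by positivity) ht0
  -- define X = C(1+ε)/e / (b/2) / e
  set X := C * (1 + ε) / E / (b / 2) / E with hX
  clear_value X
  have hX0 : 0 < X := by rw [hX]; positivity
  have hlogX : Real.log X =
      Real.log (C * (1 + ε) / E) - Real.log (b / 2) - 1 := by
    rw [hX, Real.log_div (by positivity : (C * (1 + ε) / E / (b / 2) : ℝ) ≠ 0)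
      (ne_of_gt he0), Real.log_div (by positivity : (C * (1 + ε) / E : ℝ) ≠ 0)
      (by positivity : (b / 2 : ℝ) ≠ 0), hlogE]
  have hcrude : (b / 2) * t ≤ Real.log X := by
    rw [hlogX]
    linarith
  -- M
  set M := (1 + ε) * C / b with hM
  clear_value M
  have hM0 : 0 < M := by rw [hM]; positivity
  have hM4 : (4:ℝ) ≤ M := by
    rw [hM, le_div_iff₀ hb0]
    have hεC : 0 ≤ ε * C := mul_nonneg (le_of_lt hε0) (le_of_lt hC0)
    linarith
  have hXM : X ≤ M := by
    have hXval : X = 2 / E ^ 2 * M := by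
      rw [hX, hM]; field_simp
    have hk : 2 / E ^ 2 ≤ 1 := by
      rw [div_le_one (by positivity)]
      nlinarith
    calc X = 2 / E ^ 2 * M := hXval
      _ ≤ 1 * M := mul_le_mul_of_nonneg_right hk (le_of_lt hM0)
      _ = M := one_mul M
  have hlogXM : Real.log X ≤ M := by
    calc Real.log X ≤ Real.log M := Real.log_le_log hX0 hXM
      _ ≤ M - 1 := Real.log_le_sub_one_of_pos hM0
      _ ≤ M := by linarith
  -- t ≤ 2M/b, hence (1+ε) t ≤ M * M
  have htM : (1 + ε) * t ≤ M * M := by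
    have h6 : (b / 2) * t ≤ M := le_trans hcrude hlogXM
    have h7 : 2 * (1 + ε) / b ≤ M := by
      rw [div_le_iff₀ hb0]
      have hMb : M * b = (1 + ε) * C := by rw [hM]; field_simp
      have h2C' : (1 + ε) * 2 ≤ (1 + ε) * C := by
        exact mul_le_mul_of_nonneg_left hC2 (by linarith)
      linarith
    -- (1+ε) t ≤ (1+ε) * (2M/b) ≤ M * M
    have h8 : t ≤ 2 * M / b := by
      rw [le_div_iff₀ hb0]
      linarith
    calc (1 + ε) * t ≤ (1 + ε) * (2 * M / b) := by
          exact mul_le_mul_of_nonneg_left h8 (by linarith)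
      _ = (2 * (1 + ε) / b) * M := by ring
      _ ≤ M * M := mul_le_mul_of_nonneg_right h7 (le_of_lt hM0)
  -- bootstrap
  have hlog2 : Real.log ((1 + ε) * t) ≤ 2 * Real.log M := by
    calc Real.log ((1 + ε) * t) ≤ Real.log (M * M) := Real.log_le_log hεt0 htM
      _ = Real.log M + Real.log M := Real.log_mul (ne_of_gt hM0) (ne_of_gt hM0)
      _ = 2 * Real.log M := by ring
  have hlogM0 : 0 < Real.log M := Real.log_pos (by linarith)
  have hfin : b * t ≤ Real.log (2 * C * Real.log M) := by
    calc b * t ≤ Real.log (C * Real.log ((1 + ε) * t)) := hbt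
      _ ≤ Real.log (2 * C * Real.log M) := by
          apply Real.log_le_log hCL0
          calc C * Real.log ((1 + ε) * t) ≤ C * (2 * Real.log M) :=
                mul_le_mul_of_nonneg_left hlog2 (le_of_lt hC0)
            _ = 2 * C * Real.log M := by ring
  -- identify the goal's expression
  have hMeq : 2 * c * (K:ℝ) * (1 + s) ^ 2 * (1 + ε) ^ 2 / (δ * Δ ^ 2) = M := by
    rw [hM, hC, hb, hA]
    field_simp
  have h2C : 2 * c * (K:ℝ) / δ = 2 * C := by
    rw [hC]; field_simp
  rw [hMeq, h2C]
  have hAΔ : A / Δ ^ 2 = 1 / b := by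
    rw [hb]
    field_simp
  rw [hAΔ, one_div, ← div_eq_inv_mul, le_div_iff₀ hb0]
  linarith
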